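/- Let I be a subset of the domain of a majority operation f closed under the 'ideal' rule: whenever at least two of a, b, c belong to I, f(a,b,c) ∈ I. If f is the interval-midpoint majority operation on {1,...,n} (defined for a < b < c by: f(a,b,c) = a if ⌈(a+c)/2⌉ < b; f(a,b,c) = b if b ∈ {⌊(a+c)/2⌋, ⌈(a+c)/2⌉}; f(a,b,c) = c if b < ⌊(a+c)/2⌋; extended by total symmetry and the majority rule), then every such ideal I is convex: if a, c ∈ I and a ≤ b ≤ c, then b ∈ I. -/

import Mathlib

/-- The value of the interval-midpoint majority operation on a sorted triple
`a ≤ b ≤ c` (including the majority rule when two entries coincide);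
`(a+c)/2` is `⌊(a+c)/2⌋` and `(a+c+1)/2` is `⌈(a+c)/2⌉`. -/
def fbase (a b c : ℕ) : ℕ :=
  if a = b ∨ b = c then b
  else if (a + c + 1) / 2 < b then a
  else if b = (a + c) / 2 ∨ b = (a + c + 1) / 2 then b
  else c

/-- The middle element of a triple of naturals. -/
def mid3 (x y z : ℕ) : ℕ := x + y + z - max x (max y z) - min x (min y z)

/-- The interval-midpoint majority operation, extended to all triples by
total symmetry (via sorting) and the majority rule. -/
def fA (x y z : ℕ) : ℕ := fbase (min x (min y z)) (mid3 x y z) (max x (max y z))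

/-- Every ideal of the interval-midpoint majority algebra on `{1,…,n}` (a subset
`I` such that `f(a,b,c) ∈ I` whenever at least two of `a,b,c` lie in `I`)
is convex. -/
theorem midpoint_ideal_convex (n : ℕ) (I : Set ℕ)
    (hI : I ⊆ Set.Icc 1 n)
    (hideal : ∀ a b c : ℕ, a ∈ Set.Icc 1 n → b ∈ Set.Icc 1 n → c ∈ Set.Icc 1 n →
      ((a ∈ I ∧ b ∈ I) ∨ (a ∈ I ∧ c ∈ I) ∨ (b ∈ I ∧ c ∈ I)) → fA a b c ∈ I) :
    ∀ a b c : ℕ, a ∈ I → c ∈ I → a ≤ b → b ≤ c → b ∈ I := by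

  have key : ∀ d a b c : ℕ, c - a ≤ d → a ∈ I → c ∈ I → a ≤ b → b ≤ c → b ∈ I := by
    intro d
    induction d with
    | zero =>
      intro a b c hle ha hc hab hbc
      have : b = a := by omega
      rwa [this]
    | succ d ih =>
      intro a b c hle ha hc hab hbc
      by_cases hsm : c - a ≤ d
      · exact ih a b c hsm ha hc hab hbc
      · have hca : c - a = d + 1 := by omega
        by_cases hd0 : d = 0
        · -- c - a = 1, so b = a or b = c
          have : b = a ∨ b = c := by omega
          rcases this with h | h <;> rw [h] <;> assumption
        · set m := (a + c) / 2 with hm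
          have haIcc := hI ha
          have hcIcc := hI hc
          simp only [Set.mem_Icc] at haIcc hcIcc
          have ham : a ≤ m := by omega
          have hmc : m ≤ c := by omega
          have hmIcc : m ∈ Set.Icc 1 n := by simp only [Set.mem_Icc]; omega
          have hfA : fA a m c = m := by
            have h1 : min a (min m c) = a := by rw [min_eq_left hmc, min_eq_left ham]
            have h2 : max a (max m c) = c := by rw [max_eq_right hmc, max_eq_right (ham.trans hmc)]
            have h3 : mid3 a m c = m := by
              simp only [mid3, h1, h2]; omega
            simp only [fA, h1, h2, h3, fbase]
            split_ifs with h4 h5 h6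
            · rfl
            · omega
            · rfl
            · exact absurd (Or.inl hm) h6
          have hmI : m ∈ I := by
            have := hideal a m c haIcc hmIcc hcIcc (Or.inr (Or.inl ⟨ha, hc⟩))
            rwa [hfA] at this
          by_cases hbm : b ≤ m
          · exact ih a b m (by omega) ha hmI hab hbm
          · exact ih m b c (by omega) hmI hc (by omega) hbc
  intro a b c ha hc hab hbc
  exact key (c - a) a b c le_rfl ha hc hab hbc
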